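/- Optimal user-specific frequency reuse (continuous relaxation of Proposition 3, FR_u): let β > 1 and c > 0. The function φ(p) = p·ln(1 + c·p^(−β)), defined for p > 0, attains a global maximum at a unique point p* > 0, and p* is characterized by the first-order condition (c + (p*)^β)·ln(1 + c·(p*)^(−β)) = β·c. -/

import Mathlib

open Filter Real Set

noncomputable def hfun (β u : ℝ) : ℝ := (1 + u) * Real.log (1 + u) - β * u

lemma hasDerivAt_hfun (β u : ℝ) (hu : 0 < 1 + u) :
    HasDerivAt (hfun β) (Real.log (1 + u) + 1 - β) u := by
  have h1 : HasDerivAt (fun v : ℝ => 1 + v) 1 u := by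
    simpa using (hasDerivAt_id u).const_add 1
  have h2 : HasDerivAt (fun v : ℝ => Real.log (1 + v)) (1 / (1 + u)) u := by
    simpa using h1.log hu.ne'
  have h3 : HasDerivAt (fun v : ℝ => (1 + v) * Real.log (1 + v))
      (1 * Real.log (1 + u) + (1 + u) * (1 / (1 + u))) u := h1.fun_mul h2
  have h4 : HasDerivAt (fun v : ℝ => β * v) β u := by
    simpa using (hasDerivAt_id u).const_mul β
  have h5 : HasDerivAt (hfun β)
      (1 * Real.log (1 + u) + (1 + u) * (1 / (1 + u)) - β) u := h3.fun_sub h4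
  convert h5 using 1
  have : (1:ℝ) + u ≠ 0 := hu.ne'
  field_simp

lemma hfun_root (β : ℝ) (hβ : 1 < β) : ∃ u0 : ℝ, 0 < u0 ∧ hfun β u0 = 0 ∧
    (∀ u, 0 < u → u < u0 → hfun β u < 0) ∧ (∀ u, u0 < u → 0 < hfun β u) := by
  set m : ℝ := Real.exp (β - 1) - 1 with hm_def
  set b : ℝ := Real.exp β - 1 with hb_def
  have hm0 : 0 < m := by
    have : (1:ℝ) < Real.exp (β - 1) := Real.one_lt_exp_iff.mpr (by linarith)
    simp only [hm_def]; linarith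
  have hmb : m < b := by
    have : Real.exp (β - 1) < Real.exp β := Real.exp_lt_exp.mpr (by linarith)
    simp only [hm_def, hb_def]; linarith
  have h1m : (1:ℝ) + m = Real.exp (β - 1) := by ring
  have h1b : (1:ℝ) + b = Real.exp β := by ring
  have hcont : ∀ s : Set ℝ, s ⊆ Ioi (-1 : ℝ) → ContinuousOn (hfun β) s := by
    intro s hs x hx
    exact ((hasDerivAt_hfun β x (by have := hs hx; simp at this; linarith)).continuousAt).continuousWithinAt
  -- h m < 0
  have hhm : hfun β m = β - Real.exp (β - 1) := by
    simp only [hfun, h1m, Real.log_exp]; ring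
  have hexp_gt : β < Real.exp (β - 1) := by
    have := Real.add_one_lt_exp (x := β - 1) (by linarith)
    linarith
  have hhm_neg : hfun β m < 0 := by rw [hhm]; linarith
  have hhb : hfun β b = β := by
    simp only [hfun, h1b, Real.log_exp]; ring
  have hhb_pos : 0 < hfun β b := by rw [hhb]; linarith
  -- IVT on [m, b]
  have hsub : Icc m b ⊆ Ioi (-1 : ℝ) := fun x hx => by
    have := hx.1; simp; linarith
  have := intermediate_value_Icc hmb.le (hcont _ hsub)
  obtain ⟨u0, hu0mem, hu0⟩ := this ⟨hhm_neg.le, hhb_pos.le⟩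
  -- strict mono on Ici m
  have hmono : StrictMonoOn (hfun β) (Ici m) := by
    apply strictMonoOn_of_deriv_pos (convex_Ici m)
      (hcont _ (fun x hx => by simp at hx ⊢; linarith))
    intro x hx
    rw [interior_Ici] at hx
    have hx1 : 0 < 1 + x := by simp at hx; linarith
    rw [(hasDerivAt_hfun β x hx1).deriv]
    have : β - 1 < Real.log (1 + x) := by
      rw [← Real.log_exp (β - 1), ← h1m]
      exact Real.log_lt_log (by linarith) (by simp at hx; linarith)
    linarith
  -- strict anti on Icc 0 m
  have hanti : StrictAntiOn (hfun β) (Icc 0 m) := by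
    apply strictAntiOn_of_deriv_neg (convex_Icc 0 m)
      (hcont _ (fun x hx => by have := hx.1; simp; linarith))
    intro x hx
    rw [interior_Icc] at hx
    have hx1 : 0 < 1 + x := by linarith [hx.1]
    rw [(hasDerivAt_hfun β x hx1).deriv]
    have : Real.log (1 + x) < β - 1 := by
      rw [← Real.log_exp (β - 1), ← h1m]
      exact Real.log_lt_log (by linarith [hx.1]) (by linarith [hx.2])
    linarith
  have hmu0 : m < u0 := by
    rcases lt_or_eq_of_le hu0mem.1 with h | h
    · exact h
    · exfalso; rw [← h] at hu0; rw [hu0] at hhm_neg; exact lt_irrefl _ hhm_neg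
  refine ⟨u0, lt_trans hm0 hmu0, hu0, ?_, ?_⟩
  · intro u hu hulu0
    rcases le_or_gt u m with h | h
    · have := hanti (left_mem_Icc.mpr hm0.le) ⟨hu.le, h⟩ hu
      simpa [hfun] using this
    · have := hmono (le_of_lt h : m ≤ u) (le_of_lt hmu0 : m ≤ u0) hulu0
      rw [hu0] at this; exact this
  · intro u hu
    have := hmono (le_of_lt hmu0 : m ≤ u0) (le_of_lt (lt_trans hmu0 hu) : m ≤ u) hu
    rw [hu0] at this; exact this

lemma hasDerivAt_phi (β c : ℝ) (hc : 0 < c) (p : ℝ) (hp : 0 < p) :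
    HasDerivAt (fun q : ℝ => q * Real.log (1 + c * q ^ (-β)))
      (hfun β (c * p ^ (-β)) / (1 + c * p ^ (-β))) p := by
  have hpow : HasDerivAt (fun q : ℝ => q ^ (-β)) (-β * p ^ (-β - 1)) p :=
    Real.hasDerivAt_rpow_const (Or.inl hp.ne')
  have hu : HasDerivAt (fun q : ℝ => 1 + c * q ^ (-β)) (c * (-β * p ^ (-β - 1))) p := by
    simpa using (hpow.const_mul c).const_add 1
  have hupos : 0 < c * p ^ (-β) := mul_pos hc (Real.rpow_pos_of_pos hp _)
  have h1u : (0:ℝ) < 1 + c * p ^ (-β) := by linarith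
  have hlog := hu.log h1u.ne'
  have hmul : HasDerivAt (fun q : ℝ => q * Real.log (1 + c * q ^ (-β)))
      (1 * Real.log (1 + c * p ^ (-β)) + id p * (c * (-β * p ^ (-β - 1)) / (1 + c * p ^ (-β)))) p :=
    (hasDerivAt_id p).fun_mul hlog
  convert hmul using 1
  have hpp : p * p ^ (-β - 1) = p ^ (-β) := by
    have h := Real.rpow_add hp 1 (-β - 1)
    rw [Real.rpow_one] at h
    norm_num at h
    linarith
  have hRHS : 1 * Real.log (1 + c * p ^ (-β)) + id p * (c * (-β * p ^ (-β - 1)) / (1 + c * p ^ (-β)))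
      = Real.log (1 + c * p ^ (-β)) - β * (c * p ^ (-β)) / (1 + c * p ^ (-β)) := by
    simp only [id_eq]; rw [← hpp]; ring
  rw [hRHS]
  have h1u' : (1 + c * p ^ (-β)) ≠ 0 := h1u.ne'
  simp only [hfun]
  field_simp

/-- Optimal user-specific frequency reuse (continuous relaxation of Proposition 3, FR_u):
for `β > 1` and `c > 0`, the function `φ(p) = p·ln(1 + c·p^(-β))` on `(0,∞)` attains a
global maximum at a unique point `p* > 0`, characterized by the first-order condition
`(c + p*^β)·ln(1 + c·p*^(-β)) = β·c`. -/
theorem optimal_user_frequency_reuse (β c : ℝ) (hβ : 1 < β) (hc : 0 < c) :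
    ∃ p : ℝ, 0 < p ∧
      (∀ p' : ℝ, 0 < p' →
        p' * Real.log (1 + c * p' ^ (-β)) ≤ p * Real.log (1 + c * p ^ (-β))) ∧
      (∀ p' : ℝ, 0 < p' →
        (∀ p'' : ℝ, 0 < p'' →
          p'' * Real.log (1 + c * p'' ^ (-β)) ≤ p' * Real.log (1 + c * p' ^ (-β))) →
        p' = p) ∧
      (c + p ^ β) * Real.log (1 + c * p ^ (-β)) = β * c := by
  obtain ⟨u0, hu0pos, hu0root, hneg, hpos⟩ := hfun_root β hβ
  set φ : ℝ → ℝ := fun q => q * Real.log (1 + c * q ^ (-β)) with hφ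
  set p : ℝ := (c / u0) ^ β⁻¹ with hp_def
  have hcu : 0 < c / u0 := div_pos hc hu0pos
  have hp : 0 < p := Real.rpow_pos_of_pos hcu _
  have hβ0 : β ≠ 0 := by positivity
  have hpβ : p ^ β = c / u0 := by
    rw [hp_def, ← Real.rpow_mul hcu.le, inv_mul_cancel₀ hβ0, Real.rpow_one]
  have hpu : c * p ^ (-β) = u0 := by
    rw [Real.rpow_neg hp.le, hpβ]
    field_simp
  have hupos' : ∀ q : ℝ, 0 < q → 0 < c * q ^ (-β) :=
    fun q hq => mul_pos hc (Real.rpow_pos_of_pos hq _)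
  have huanti : ∀ q1 q2 : ℝ, 0 < q1 → q1 < q2 → c * q2 ^ (-β) < c * q1 ^ (-β) := by
    intro q1 q2 h1 h12
    apply mul_lt_mul_of_pos_left _ hc
    rw [Real.rpow_neg h1.le, Real.rpow_neg (le_trans h1.le h12.le)]
    have hlt : q1 ^ β < q2 ^ β := Real.rpow_lt_rpow h1.le h12 (by linarith)
    exact inv_strictAnti₀ (Real.rpow_pos_of_pos h1 β) hlt
  have hderiv : ∀ q : ℝ, 0 < q → deriv φ q = hfun β (c * q ^ (-β)) / (1 + c * q ^ (-β)) :=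
    fun q hq => (hasDerivAt_phi β c hc q hq).deriv
  have hcontOn : ∀ s : Set ℝ, s ⊆ Ioi 0 → ContinuousOn φ s :=
    fun s hs q hq =>
      ((hasDerivAt_phi β c hc q (hs hq)).differentiableAt.continuousAt).continuousWithinAt
  have hmono : StrictMonoOn φ (Ioc 0 p) := by
    apply strictMonoOn_of_deriv_pos (convex_Ioc 0 p) (hcontOn _ (fun x hx => hx.1))
    intro x hx
    rw [interior_Ioc] at hx
    rw [hderiv x hx.1]
    apply div_pos
    · apply hpos
      calc u0 = c * p ^ (-β) := hpu.symm
        _ < c * x ^ (-β) := huanti x p hx.1 hx.2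
    · linarith [hupos' x hx.1]
  have hanti : StrictAntiOn φ (Ici p) := by
    apply strictAntiOn_of_deriv_neg (convex_Ici p)
      (hcontOn _ (fun x hx => lt_of_lt_of_le hp hx))
    intro x hx
    rw [interior_Ici] at hx
    have hx0 : 0 < x := lt_trans hp hx
    rw [hderiv x hx0]
    apply div_neg_of_neg_of_pos
    · exact hneg _ (hupos' x hx0) (by rw [← hpu]; exact huanti p x hp hx)
    · linarith [hupos' x hx0]
  have hmax : ∀ p' : ℝ, 0 < p' → φ p' ≤ φ p := by
    intro p' hp'
    rcases le_or_gt p' p with h | h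
    · exact hmono.monotoneOn ⟨hp', h⟩ ⟨hp, le_rfl⟩ h
    · exact hanti.antitoneOn self_mem_Ici (mem_Ici.mpr h.le) h.le
  refine ⟨p, hp, hmax, ?_, ?_⟩
  · intro p' hp' hmax'
    by_contra hne
    rcases lt_or_gt_of_ne hne with h | h
    · have h1 : φ p' < φ p := hmono ⟨hp', h.le⟩ ⟨hp, le_rfl⟩ h
      have h2 : φ p ≤ φ p' := hmax' p hp
      linarith
    · have h1 : φ p' < φ p := hanti self_mem_Ici (mem_Ici.mpr h.le) h
      have h2 : φ p ≤ φ p' := hmax' p hp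
      linarith
  · rw [hpu, hpβ]
    have h1 : (1 + u0) * Real.log (1 + u0) = β * u0 := by
      have h := hu0root; simp only [hfun] at h; linarith
    have hu0ne : u0 ≠ 0 := hu0pos.ne'
    have h2 : c + c / u0 = c / u0 * (1 + u0) := by field_simp; ring
    rw [h2, mul_assoc, h1]
    field_simp
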